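/- Let X be a zero-mean random vector in R^d with covariance matrix Σ satisfying the L4-L2 moment equivalence with constant κ, and let p ∈ (0,1] and Y = X ⊙ p. Then there exists an absolute constant C > 0 such that E ( Σ_{i=1}^d ⟨Y, e_i⟩² )² ≤ C p κ⁴ tr(Σ)². Moreover E Σ_{i=1}^d ⟨Y, e_i⟩² = p tr(Σ). -/

import Mathlib

open MeasureTheory ProbabilityTheory Real
open scoped ENNReal NNReal

noncomputable section

/-- The diagonal part of a matrix: off-diagonal entries set to zero. -/
def diagPart {d : ℕ} (M : Matrix (Fin d) (Fin d) ℝ) : Matrix (Fin d) (Fin d) ℝ :=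
  Matrix.of fun i j => if i = j then M i j else 0

/-- The off-diagonal part of a matrix. -/
def offPart {d : ℕ} (M : Matrix (Fin d) (Fin d) ℝ) : Matrix (Fin d) (Fin d) ℝ :=
  M - diagPart M

/-- Outer product `x xᵀ`. -/
def outer {d : ℕ} (x : Fin d → ℝ) : Matrix (Fin d) (Fin d) ℝ :=
  Matrix.of fun i j => x i * x j

/-- Bilinear form `uᵀ M w`. -/
def bilinForm {d : ℕ} (M : Matrix (Fin d) (Fin d) ℝ) (u w : Fin d → ℝ) : ℝ :=
  ∑ i, ∑ j, u i * M i j * w j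

/-- Quadratic form `vᵀ M v`. -/
def quadForm {d : ℕ} (M : Matrix (Fin d) (Fin d) ℝ) (v : Fin d → ℝ) : ℝ :=
  bilinForm M v v

/-- Operator (spectral) norm of a matrix acting on Euclidean space. -/
def opNorm {d : ℕ} (M : Matrix (Fin d) (Fin d) ℝ) : ℝ :=
  ‖LinearMap.toContinuousLinearMap (Matrix.toEuclideanLin M)‖

/-- Effective rank `tr Σ / ‖Σ‖`. -/
def effRank {d : ℕ} (S : Matrix (Fin d) (Fin d) ℝ) : ℝ :=
  S.trace / opNorm S

/-- The unit sphere `S^{d-1}` in `ℝ^d`. -/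
def unitSphere (d : ℕ) : Set (Fin d → ℝ) := {v | ∑ i, (v i) ^ 2 = 1}

/-- The truncation function: `ψ(x) = x` on `[-1,1]` and `ψ(x) = sign x` for `|x| > 1`. -/
def psi (x : ℝ) : ℝ := max (-1) (min 1 x)

variable {Ω : Type*} [MeasureSpace Ω]

/-- `X` has zero mean (coordinatewise integrable with zero integral). -/
def ZeroMean {d : ℕ} (X : Ω → Fin d → ℝ) : Prop :=
  ∀ i, Integrable (fun ω => X ω i) ∧ ∫ ω, X ω i = 0

/-- `S` is the covariance matrix of the (zero-mean) random vector `X`. -/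
def IsCov {d : ℕ} (X : Ω → Fin d → ℝ) (S : Matrix (Fin d) (Fin d) ℝ) : Prop :=
  ∀ i j, S i j = ∫ ω, X ω i * X ω j

/-- All fourth moments of the coordinates of `X` are finite. -/
def FiniteFourthMoments {d : ℕ} (X : Ω → Fin d → ℝ) : Prop :=
  ∀ i j k l : Fin d, Integrable (fun ω => X ω i * X ω j * X ω k * X ω l)

/-- The `L₄-L₂` moment equivalence (hypercontractivity) with constant `κ`:
for every unit vector `v`, `(E|⟨X,v⟩|⁴)^{1/4} ≤ κ (E|⟨X,v⟩|²)^{1/2}`. -/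
def L4L2 {d : ℕ} (X : Ω → Fin d → ℝ) (κ : ℝ) : Prop :=
  ∀ v ∈ unitSphere d,
    (∫ ω, |∑ i, X ω i * v i| ^ 4) ^ ((1 : ℝ)/4) ≤
      κ * (∫ ω, |∑ i, X ω i * v i| ^ 2) ^ ((1 : ℝ)/2)

/-- `ε : Ω → Fin d → ℝ` is a vector of i.i.d. Bernoulli(p) {0,1}-valued random variables. -/
def IsBernoulliMask {d : ℕ} (p : ℝ) (ε : Ω → Fin d → ℝ) : Prop :=
  (∀ ω i, ε ω i = 0 ∨ ε ω i = 1) ∧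
  (∀ i, Measurable fun ω => ε ω i) ∧
  (∀ i, (ℙ : Measure Ω) {ω | ε ω i = 1} = ENNReal.ofReal p) ∧
  iIndepFun (fun i ω => ε ω i) ℙ

/-- `Y = X ⊙ p`: the `p`-sparsification of `X` by the Bernoulli mask `ε`,
with `ε` independent of `X`. -/
def IsSparsified {d : ℕ} (p : ℝ) (X ε Y : Ω → Fin d → ℝ) : Prop :=
  IsBernoulliMask p ε ∧ Measurable X ∧ IndepFun X ε ∧ ∀ ω i, Y ω i = X ω i * ε ω i

/-- `Y 0, ..., Y (N-1)` are i.i.d. copies of the `p`-sparsification of `X`. -/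
def IsIIDSparsifiedSample {d N : ℕ} (p : ℝ) (X : Ω → Fin d → ℝ)
    (Y : Fin N → Ω → Fin d → ℝ) : Prop :=
  (∀ j, Measurable (Y j)) ∧
  iIndepFun Y ℙ ∧
  ∃ ε Y₀, Measurable Y₀ ∧ IsSparsified p X ε Y₀ ∧
    ∀ j, Measure.map (Y j) ℙ = Measure.map Y₀ ℙ

/-- `θ` is a Gaussian vector with mean `m` and covariance `σ2 • I` (independent
Gaussian coordinates). -/
def IsGaussianVecIndep {d : ℕ} (m : Fin d → ℝ) (σ2 : ℝ≥0) (θ : Ω → Fin d → ℝ) : Prop :=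
  (∀ i, Measurable fun ω => θ ω i) ∧
  (∀ i, Measure.map (fun ω => θ ω i) ℙ = gaussianReal (m i) σ2) ∧
  iIndepFun (fun i ω => θ ω i) ℙ

/-- `G` is a centered Gaussian vector with covariance matrix `S`: every linear marginal
`⟨G, v⟩` is a real Gaussian with mean `0` and variance `vᵀ S v`. -/
def IsCenteredGaussianVector {d : ℕ} (S : Matrix (Fin d) (Fin d) ℝ) (G : Ω → Fin d → ℝ) : Prop :=
  Measurable G ∧
  ∀ v : Fin d → ℝ, Measure.map (fun ω => ∑ i, G ω i * v i) ℙ =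
    gaussianReal 0 (quadForm S v).toNNReal

end


section Aux

lemma aux_rpow_helper {A B k : ℝ} (hA : 0 ≤ A) (hB : 0 ≤ B) (hk : 0 ≤ k)
    (h : A ^ ((1:ℝ)/4) ≤ k * B ^ ((1:ℝ)/2)) : A ≤ k ^ 4 * B ^ 2 := by
  have h4 := pow_le_pow_left₀ (Real.rpow_nonneg hA _) h 4
  calc A = (A ^ ((1:ℝ)/4)) ^ (4:ℕ) := by
        rw [← Real.rpow_natCast (A ^ ((1:ℝ)/4)) 4, ← Real.rpow_mul hA]
        norm_num
    _ ≤ (k * B ^ ((1:ℝ)/2)) ^ (4:ℕ) := h4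
    _ = k ^ 4 * B ^ 2 := by
        rw [mul_pow, ← Real.rpow_natCast (B ^ ((1:ℝ)/2)) 4, ← Real.rpow_mul hB]
        norm_num

lemma aux_sq_rpow_half {x : ℝ} (hx : 0 ≤ x) : (x ^ 2) ^ ((1:ℝ)/2) = x := by
  rw [← Real.rpow_natCast x 2, ← Real.rpow_mul hx]
  norm_num

lemma aux_rpow_two (x : ℝ) : x ^ (2:ℝ) = x ^ 2 := by
  rw [show (2:ℝ) = ((2:ℕ):ℝ) by norm_num, Real.rpow_natCast]

/-- Cauchy-Schwarz for nonnegative square-integrable functions on a probability space. -/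
lemma aux_cauchy_schwarz {Ω : Type*} [MeasureSpace Ω] [IsProbabilityMeasure (ℙ : Measure Ω)]
    {f g : Ω → ℝ} (hf : Measurable f) (hg : Measurable g)
    (hf0 : ∀ ω, 0 ≤ f ω) (hg0 : ∀ ω, 0 ≤ g ω)
    (hf2 : Integrable (fun ω => f ω ^ 2)) (hg2 : Integrable (fun ω => g ω ^ 2)) :
    ∫ ω, f ω * g ω ≤ (∫ ω, f ω ^ 2) ^ ((1:ℝ)/2) * (∫ ω, g ω ^ 2) ^ ((1:ℝ)/2) := by
  have hconj : (2:ℝ).HolderConjugate 2 := Real.HolderConjugate.two_two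
  have h2 : (ENNReal.ofReal (2:ℝ)) = 2 := by
    rw [ENNReal.ofReal_ofNat]
  have hf2' : MemLp f (ENNReal.ofReal (2:ℝ)) (ℙ : Measure Ω) := by
    rw [h2]
    exact (memLp_two_iff_integrable_sq hf.aestronglyMeasurable).2 hf2
  have hg2' : MemLp g (ENNReal.ofReal (2:ℝ)) (ℙ : Measure Ω) := by
    rw [h2]
    exact (memLp_two_iff_integrable_sq hg.aestronglyMeasurable).2 hg2
  have := MeasureTheory.integral_mul_le_Lp_mul_Lq_of_nonneg hconj
    (Filter.Eventually.of_forall hf0) (Filter.Eventually.of_forall hg0) hf2' hg2'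
  simpa only [aux_rpow_two] using this

end Aux

/-- There is an absolute constant `C > 0` such that if `X` is zero-mean with
covariance `Σ` satisfying `L₄-L₂` with constant `κ`, `p ∈ (0,1]` and `Y = X ⊙ p`, then
`E (Σ_i ⟨Y,e_i⟩²)² ≤ C p κ⁴ tr(Σ)²`; moreover `E Σ_i ⟨Y,e_i⟩² = p tr(Σ)`. -/
theorem statement_16 :
    ∃ C : ℝ, 0 < C ∧
      ∀ (Ω : Type) [MeasureSpace Ω] [IsProbabilityMeasure (ℙ : Measure Ω)]
        (d : ℕ) (X ε Y : Ω → Fin d → ℝ) (S : Matrix (Fin d) (Fin d) ℝ) (κ p : ℝ),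
        ZeroMean X → IsCov X S → FiniteFourthMoments X → 1 ≤ κ → L4L2 X κ →
        p ∈ Set.Ioc (0 : ℝ) 1 → IsSparsified p X ε Y →
        (∫ ω, (∑ i, (Y ω i) ^ 2) ^ 2) ≤ C * p * κ ^ 4 * S.trace ^ 2 ∧
        (∫ ω, ∑ i, (Y ω i) ^ 2) = p * S.trace := by
  refine ⟨1, one_pos, ?_⟩
  intro Ω _ _ d X ε Y S κ p hZM hCov hFFM hκ hL4 hp hsp
  obtain ⟨⟨hε01, hεmeas, hεprob, _⟩, hXmeas, hIndep, hYdef⟩ := hsp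
  obtain ⟨hp0, hp1⟩ := hp
  have hκ0 : (0:ℝ) < κ := lt_of_lt_of_le one_pos hκ
  have hXi : ∀ i, Measurable fun ω => X ω i := fun i => (measurable_pi_apply i).comp hXmeas
  -- mask facts
  have hε_nonneg : ∀ ω i, 0 ≤ ε ω i := fun ω i => by rcases hε01 ω i with h | h <;> simp [h]
  have hε_le_one : ∀ ω i, ε ω i ≤ 1 := fun ω i => by rcases hε01 ω i with h | h <;> simp [h]
  have hε_idem : ∀ ω i, ε ω i * ε ω i = ε ω i := fun ω i => by
    rcases hε01 ω i with h | h <;> simp [h]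
  have hεint : ∀ i, Integrable (fun ω => ε ω i) := by
    intro i
    refine Integrable.mono' (integrable_const 1) (hεmeas i).aestronglyMeasurable ?_
    filter_upwards with ω
    rw [Real.norm_eq_abs, abs_le]
    exact ⟨by linarith [hε_nonneg ω i], hε_le_one ω i⟩
  have hεmean : ∀ i, (∫ ω, ε ω i) = p := by
    intro i
    have hset : MeasurableSet {ω | ε ω i = 1} := (hεmeas i) (measurableSet_singleton 1)
    have hind : (fun ω => ε ω i) = Set.indicator {ω | ε ω i = 1} (fun _ => (1:ℝ)) := by
      funext ω
      rcases hε01 ω i with h | h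
      · rw [h, Set.indicator_of_notMem]
        simp [Set.mem_setOf_eq, h]
      · rw [Set.indicator_of_mem (show ω ∈ {ω | ε ω i = 1} from h)]
        exact h
    rw [hind, integral_indicator_const _ hset, measureReal_def, hεprob i, smul_eq_mul, mul_one,
      ENNReal.toReal_ofReal hp0.le]
  have hεijint : ∀ i j, Integrable (fun ω => ε ω i * ε ω j) := by
    intro i j
    refine Integrable.mono' (integrable_const 1)
      ((hεmeas i).mul (hεmeas j)).aestronglyMeasurable ?_
    filter_upwards with ω
    rw [Real.norm_eq_abs, abs_le]
    constructor
    · have := mul_nonneg (hε_nonneg ω i) (hε_nonneg ω j); linarith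
    · exact mul_le_one₀ (hε_le_one ω i) (hε_nonneg ω j) (hε_le_one ω j)
  have hεij_le : ∀ i j, (∫ ω, ε ω i * ε ω j) ≤ p := by
    intro i j
    calc (∫ ω, ε ω i * ε ω j) ≤ ∫ ω, ε ω i :=
          integral_mono (hεijint i j) (hεint i)
            (fun ω => mul_le_of_le_one_right (hε_nonneg ω i) (hε_le_one ω j))
      _ = p := hεmean i
  have hεij_nonneg : ∀ i j, 0 ≤ ∫ ω, ε ω i * ε ω j := fun i j =>
    integral_nonneg fun ω => mul_nonneg (hε_nonneg ω i) (hε_nonneg ω j)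
  -- X moment facts
  have hX4int : ∀ i, Integrable (fun ω => X ω i ^ 4) := by
    intro i
    exact (hFFM i i i i).congr (Filter.Eventually.of_forall fun ω => by ring)
  have hXijint : ∀ i j, Integrable (fun ω => X ω i ^ 2 * X ω j ^ 2) := by
    intro i j
    exact (hFFM i i j j).congr (Filter.Eventually.of_forall fun ω => by ring)
  have hXij_nonneg : ∀ i j, 0 ≤ ∫ ω, X ω i ^ 2 * X ω j ^ 2 := fun i j =>
    integral_nonneg fun ω => mul_nonneg (sq_nonneg _) (sq_nonneg _)
  have hXsqint : ∀ i, Integrable (fun ω => X ω i ^ 2) := by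
    intro i
    have h2 : MemLp (fun ω => X ω i ^ 2) 2 (ℙ : Measure Ω) := by
      refine (memLp_two_iff_integrable_sq ((hXi i).pow_const 2).aestronglyMeasurable).2 ?_
      exact (hX4int i).congr (Filter.Eventually.of_forall fun ω => by ring)
    exact h2.integrable one_le_two
  have hSdiag : ∀ i, S i i = ∫ ω, X ω i ^ 2 := by
    intro i
    rw [hCov i i]
    exact integral_congr_ae (Filter.Eventually.of_forall fun ω => (pow_two _).symm)
  have hSnn : ∀ i, 0 ≤ S i i := by
    intro i
    rw [hSdiag i]
    exact integral_nonneg fun ω => sq_nonneg _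
  -- L4-L2 at basis vectors: ∫ X_i^4 ≤ κ^4 (S i i)^2
  have hL4i : ∀ i, (∫ ω, X ω i ^ 4) ≤ κ ^ 4 * S i i ^ 2 := by
    intro i
    have hv : (fun j => if j = i then (1:ℝ) else 0) ∈ unitSphere d := by
      simp [unitSphere, Finset.sum_ite_eq', ite_pow]
    have hdot : ∀ ω, (∑ j, X ω j * (if j = i then (1:ℝ) else 0)) = X ω i := by
      intro ω
      simp [mul_ite, Finset.sum_ite_eq']
    have h := hL4 _ hv
    simp only [hdot] at h
    have h4 : (fun ω => |X ω i| ^ 4) = fun ω => X ω i ^ 4 := by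
      funext ω; exact Even.pow_abs (by decide) _
    have h2 : (fun ω => |X ω i| ^ 2) = fun ω => X ω i ^ 2 := by
      funext ω; exact Even.pow_abs (by decide) _
    rw [h4, h2, ← hSdiag i] at h
    exact aux_rpow_helper (integral_nonneg fun ω => by positivity) (hSnn i) hκ0.le h
  -- Cauchy-Schwarz + L4-L2 bound on second moments
  have hXijbound : ∀ i j, (∫ ω, X ω i ^ 2 * X ω j ^ 2) ≤ (κ ^ 2 * S i i) * (κ ^ 2 * S j j) := by
    intro i j
    have hcs := aux_cauchy_schwarz ((hXi i).pow_const 2) ((hXi j).pow_const 2)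
      (fun ω => sq_nonneg _) (fun ω => sq_nonneg _)
      ((hX4int i).congr (Filter.Eventually.of_forall fun ω => by ring))
      ((hX4int j).congr (Filter.Eventually.of_forall fun ω => by ring))
    have hX4eq : ∀ k : Fin d, (fun ω => (X ω k ^ 2) ^ 2) = fun ω => X ω k ^ 4 := by
      intro k; funext ω; ring
    rw [hX4eq i, hX4eq j] at hcs
    have hb : ∀ k : Fin d, (∫ ω, X ω k ^ 4) ^ ((1:ℝ)/2) ≤ κ ^ 2 * S k k := by
      intro k
      have h1 : (∫ ω, X ω k ^ 4) ^ ((1:ℝ)/2) ≤ (κ ^ 4 * S k k ^ 2) ^ ((1:ℝ)/2) :=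
        Real.rpow_le_rpow (integral_nonneg fun ω => by positivity) (hL4i k) (by norm_num)
      have h2 : (κ ^ 4 * S k k ^ 2) ^ ((1:ℝ)/2) = κ ^ 2 * S k k := by
        rw [show κ ^ 4 * S k k ^ 2 = (κ ^ 2 * S k k) ^ 2 by ring,
          aux_sq_rpow_half (mul_nonneg (by positivity) (hSnn k))]
      linarith
    calc (∫ ω, X ω i ^ 2 * X ω j ^ 2)
        ≤ (∫ ω, X ω i ^ 4) ^ ((1:ℝ)/2) * (∫ ω, X ω j ^ 4) ^ ((1:ℝ)/2) := hcs
      _ ≤ (κ ^ 2 * S i i) * (κ ^ 2 * S j j) := by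
          apply mul_le_mul (hb i) (hb j)
            (Real.rpow_nonneg (integral_nonneg fun ω => by positivity) _)
            (mul_nonneg (by positivity) (hSnn i))
  -- Y facts
  have hYsq : ∀ ω i, Y ω i ^ 2 = X ω i ^ 2 * ε ω i := by
    intro ω i
    rw [hYdef ω i, mul_pow, pow_two (ε ω i), hε_idem ω i]
  have hIndep2 : ∀ i j, IndepFun (fun ω => X ω i ^ 2 * X ω j ^ 2)
      (fun ω => ε ω i * ε ω j) ℙ := by
    intro i j
    exact hIndep.comp
      (((measurable_pi_apply i).pow_const 2).mul ((measurable_pi_apply j).pow_const 2))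
      ((measurable_pi_apply i).mul (measurable_pi_apply j))
  have hIndep1 : ∀ i, IndepFun (fun ω => X ω i ^ 2) (fun ω => ε ω i) ℙ := by
    intro i
    exact hIndep.comp ((measurable_pi_apply i).pow_const 2) (measurable_pi_apply i)
  have hYprod : ∀ i j, (fun ω => Y ω i ^ 2 * Y ω j ^ 2)
      = fun ω => (X ω i ^ 2 * X ω j ^ 2) * (ε ω i * ε ω j) := by
    intro i j
    funext ω
    rw [hYsq ω i, hYsq ω j]
    ring
  have hYijint : ∀ i j, Integrable (fun ω => Y ω i ^ 2 * Y ω j ^ 2) := by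
    intro i j
    rw [hYprod i j]
    exact (hIndep2 i j).integrable_mul (hXijint i j) (hεijint i j)
  have hYkey : ∀ i j, (∫ ω, Y ω i ^ 2 * Y ω j ^ 2)
      ≤ (κ ^ 2 * S i i) * (κ ^ 2 * S j j) * p := by
    intro i j
    rw [hYprod i j]
    rw [(hIndep2 i j).integral_fun_mul_eq_mul_integral
      (((hXi i).pow_const 2).mul ((hXi j).pow_const 2)).aestronglyMeasurable
      ((hεmeas i).mul (hεmeas j)).aestronglyMeasurable]
    exact mul_le_mul (hXijbound i j) (hεij_le i j) (hεij_nonneg i j)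
      (mul_nonneg (mul_nonneg (by positivity) (hSnn i))
        (mul_nonneg (by positivity) (hSnn j)))
  have htr : S.trace = ∑ i, S i i := rfl
  constructor
  · -- second moment bound
    have hsum : (∫ ω, (∑ i, Y ω i ^ 2) ^ 2) = ∑ i, ∑ j, ∫ ω, Y ω i ^ 2 * Y ω j ^ 2 := by
      have hexp : (fun ω => (∑ i, Y ω i ^ 2) ^ 2)
          = fun ω => ∑ i, ∑ j, Y ω i ^ 2 * Y ω j ^ 2 := by
        funext ω
        rw [pow_two, Finset.sum_mul_sum]
      rw [hexp, integral_finset_sum _ (fun i _ => integrable_finset_sum _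
        fun j _ => hYijint i j)]
      exact Finset.sum_congr rfl fun i _ => integral_finset_sum _ fun j _ => hYijint i j
    rw [hsum]
    calc (∑ i, ∑ j, ∫ ω, Y ω i ^ 2 * Y ω j ^ 2)
        ≤ ∑ i, ∑ j, (κ ^ 2 * S i i) * (κ ^ 2 * S j j) * p :=
          Finset.sum_le_sum fun i _ => Finset.sum_le_sum fun j _ => hYkey i j
      _ = 1 * p * κ ^ 4 * S.trace ^ 2 := by
          rw [htr, show (1:ℝ) * p * κ ^ 4 * (∑ i, S i i) ^ 2
              = p * κ ^ 4 * ((∑ i, S i i) * (∑ j, S j j)) by ring,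
            Finset.sum_mul_sum, Finset.mul_sum]
          refine Finset.sum_congr rfl fun i _ => ?_
          rw [Finset.mul_sum]
          refine Finset.sum_congr rfl fun j _ => ?_
          ring
  · -- first moment
    have hYiint : ∀ i, Integrable (fun ω => Y ω i ^ 2) := by
      intro i
      have : (fun ω => Y ω i ^ 2) = fun ω => X ω i ^ 2 * ε ω i := funext fun ω => hYsq ω i
      rw [this]
      exact (hIndep1 i).integrable_mul (hXsqint i) (hεint i)
    rw [integral_finset_sum _ fun i _ => hYiint i]
    have : ∀ i : Fin d, (∫ ω, Y ω i ^ 2) = S i i * p := by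
      intro i
      have heq : (fun ω => Y ω i ^ 2) = fun ω => X ω i ^ 2 * ε ω i := funext fun ω => hYsq ω i
      rw [heq, (hIndep1 i).integral_fun_mul_eq_mul_integral ((hXi i).pow_const 2).aestronglyMeasurable
        (hεmeas i).aestronglyMeasurable, ← hSdiag i, hεmean i]
    simp_rw [this]
    rw [htr, Finset.mul_sum]
    exact Finset.sum_congr rfl fun i _ => mul_comm _ _
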